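/- arXiv:2402.08045 — 2 statements merged into one kernel-verified Lean document; each statement's English description precedes it below -/
import Mathlib

section
/- For every p ∈ [1/2, 1) and every n ≥ 1, ‖D_n^+‖_{H^p} ≤ 2/(1-p). -/
open Real Finset MeasureTheory

lemma abs_exp_sub_one (t : ℝ) : ‖Complex.exp (Complex.I * t) - 1‖ = 2 * |Real.sin (t/2)| := by
  rw [mul_comm, Complex.exp_mul_I]
  rw [← Complex.ofReal_cos, ← Complex.ofReal_sin]
  have : (Real.cos t : ℂ) + Real.sin t * Complex.I - 1 = ((Real.cos t - 1 : ℝ) : ℂ) + (Real.sin t : ℝ) * Complex.I := by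
    push_cast; ring
  rw [this, Complex.norm_add_mul_I]
  have h1 : (Real.cos t - 1)^2 + Real.sin t ^2 = 4 * Real.sin (t/2)^2 := by
    have := Real.sin_sq_eq_half_sub (t/2)
    have h2 := Real.sin_sq_add_cos_sq t
    rw [show 2*(t/2) = t by ring] at this
    nlinarith
  rw [h1, show (4:ℝ) * Real.sin (t/2)^2 = (2*|Real.sin (t/2)|)^2 by rw [mul_pow, sq_abs]; ring]
  exact Real.sqrt_sq (by positivity)

lemma dirichlet_bound (n : ℕ) (t : ℝ) (ht : t ∈ Set.Icc (-π) π) (ht0 : t ≠ 0) :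
    ‖∑ j ∈ Finset.range n, Complex.exp (Complex.I * t) ^ j‖ ≤ π / |t| := by
  obtain ⟨h1, h2⟩ := ht
  have hpi := Real.pi_pos
  have hz1 : Complex.exp (Complex.I * t) ≠ 1 := by
    rw [Ne, Complex.exp_eq_one_iff]
    rintro ⟨k, hk⟩
    apply congrArg Complex.im at hk
    simp at hk
    rcases lt_trichotomy (k:ℝ) 0 with hk' | hk' | hk'
    · have : (k:ℝ) ≤ -1 := by exact_mod_cast Int.le_of_lt_add_one (by exact_mod_cast hk')
      nlinarith
    · apply ht0; rw [hk]; rw [hk']; ring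
    · have : (1:ℝ) ≤ k := by exact_mod_cast hk'
      nlinarith
  rw [geom_sum_eq hz1, norm_div]
  have hden : ‖Complex.exp (Complex.I * t) - 1‖ = 2 * |Real.sin (t/2)| :=
    abs_exp_sub_one t
  have hz : ‖Complex.exp (Complex.I * t)‖ = 1 := by
    rw [mul_comm, Complex.norm_exp_ofReal_mul_I]
  have hnum : ‖Complex.exp (Complex.I * t) ^ n - 1‖ ≤ 2 := by
    calc ‖Complex.exp (Complex.I * t) ^ n - 1‖
        ≤ ‖Complex.exp (Complex.I * t) ^ n‖ + ‖(1:ℂ)‖ :=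
          norm_sub_le _ 1
      _ ≤ 2 := by rw [norm_pow, hz, one_pow]; norm_num
  have hsin : |t| / π ≤ |Real.sin (t/2)| := by
    have habs : |t| ≤ π := abs_le.mpr ⟨h1, h2⟩
    have hb : |t|/2 ≤ π/2 := by linarith
    have := Real.mul_le_sin (x := |t|/2) (by positivity) hb
    have hs : Real.sin (|t|/2) ≤ |Real.sin (t/2)| := by
      rcases abs_cases t with ⟨he, _⟩ | ⟨he, _⟩
      · rw [he]; exact le_abs_self _
      · rw [he, show -t/2 = -(t/2) by ring, Real.sin_neg]
        exact neg_le_abs _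
    calc |t|/π = 2/π * (|t|/2) := by field_simp
      _ ≤ Real.sin (|t|/2) := this
      _ ≤ |Real.sin (t/2)| := hs
  have ht0' : 0 < |t| := abs_pos.mpr ht0
  have htp : 0 < |t|/π := by positivity
  rw [hden]
  calc ‖Complex.exp (Complex.I * t) ^ n - 1‖ / (2 * |Real.sin (t/2)|)
      ≤ 2 / (2 * (|t|/π)) := by gcongr
    _ = π / |t| := by field_simp


lemma scalar_ineq {p : ℝ} (hp1 : 1/2 ≤ p) (hp2 : p < 1) :
    ((1/(1-p)) : ℝ) ^ (1/p) ≤ 2/(1-p) := by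
  have hq : 0 < 1 - p := by linarith
  have hp0 : 0 < p := by linarith
  have hx : (0:ℝ) < 1/(1-p) := by positivity
  have hy : (0:ℝ) < 2/(1-p) := by positivity
  rw [← Real.log_le_log_iff (Real.rpow_pos_of_pos hx _) hy, Real.log_rpow hx]
  rw [Real.log_div (by norm_num) hq.ne', Real.log_div (by norm_num) hq.ne', Real.log_one]
  -- goal: 1/p * (0 - log (1-p)) ≤ log 2 - log (1-p)
  have hlog2 : Real.log 2 ≥ 1/2 := by
    have := Real.log_two_gt_d9
    linarith
  -- key: -(1-p) * log (1-p) ≤ p * log 2, i.e. q*log(1/q) ≤ (1-q) log 2 with q = 1-p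
  set q := 1 - p with hqdef
  have key : -(q * Real.log q) ≤ (1 - q) * Real.log 2 := by
    have h2q : 0 < 2*q := by linarith
    have hlq : Real.log (1/(2*q)) ≤ 1/(2*q) - 1 := Real.log_le_sub_one_of_pos (by positivity)
    rw [Real.log_div (by norm_num) h2q.ne', Real.log_mul (by norm_num) hq.ne', Real.log_one] at hlq
    have hq2 : q ≤ 1/2 := by simp only [hqdef]; linarith
    -- hlq : 0 - (log 2 + log q) ≤ 1/(2q) - 1
    have hhalf : q * (1/(2*q)) = 1/2 := by field_simp
    have h1 : -(q * Real.log q) ≤ q * Real.log 2 + 1/2 - q := by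
      nlinarith [mul_le_mul_of_nonneg_left hlq hq.le]
    have h2 : 1/2 - q ≤ (1 - 2*q) * Real.log 2 := by nlinarith
    -- -log q = log 2 - log(2q) ... -log q ≤ log 2 - (stuff)?  We need -q log q ≤ (1-q) log 2.
    -- -q log q = q(log 2 - log(2q)) and -log(2q) ≤ ... need lower bound... use log x ≥ 1 - 1/x:
    nlinarith
  have hq2 : q ≤ 1/2 := by simp [hqdef]; linarith
  -- goal: 1/p * (-log q) ≤ log 2 - log q, multiply by p > 0
  rw [div_mul_eq_mul_div, div_le_iff₀ hp0]
  have hlogq : Real.log q ≤ 0 := Real.log_nonpos hq.le (by linarith)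
  nlinarith [key]


lemma sum_even (n : ℕ) (x : ℝ) :
    ‖∑ j ∈ Finset.range n, Complex.exp (Complex.I * (-x : ℝ)) ^ j‖
      = ‖∑ j ∈ Finset.range n, Complex.exp (Complex.I * x) ^ j‖ := by
  have : (∑ j ∈ Finset.range n, Complex.exp (Complex.I * (-x : ℝ)) ^ j)
      = (starRingEnd ℂ) (∑ j ∈ Finset.range n, Complex.exp (Complex.I * x) ^ j) := by
    rw [map_sum]
    refine Finset.sum_congr rfl fun j _ => ?_
    rw [map_pow, ← Complex.exp_conj]
    congr 1
    simp [map_mul, Complex.conj_I, Complex.conj_ofReal]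
  rw [this, Complex.norm_conj]


theorem half_bound (p : ℝ) (hp : p ∈ Set.Ico (1/2 : ℝ) 1) (n : ℕ) :
    (∫ t in (0:ℝ)..Real.pi,
      ‖∑ j ∈ Finset.range n, Complex.exp (Complex.I * t) ^ j‖ ^ p) ≤ π / (1-p) := by
  obtain ⟨hp1, hp2⟩ := hp
  have hp0 : (0:ℝ) < p := by linarith
  have hq : (0:ℝ) < 1 - p := by linarith
  have hpi := Real.pi_pos
  set F : ℝ → ℝ := fun t => ‖∑ j ∈ Finset.range n, Complex.exp (Complex.I * t) ^ j‖ ^ p with hF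
  have hFcont : Continuous F := by
    apply Continuous.rpow_const
    · exact continuous_norm.comp (continuous_finset_sum _ fun j _ =>
        ((Complex.continuous_exp.comp (by continuity)).pow j))
    · exact fun x => Or.inr hp0.le
  set G : ℝ → ℝ := fun t => π ^ p * t ^ (-p) with hG
  have hGint : IntervalIntegrable G volume 0 π :=
    (intervalIntegral.intervalIntegrable_rpow' (by linarith)).const_mul _
  have hmono : (∫ t in (0:ℝ)..π, F t) ≤ ∫ t in (0:ℝ)..π, G t := by
    apply intervalIntegral.integral_mono_ae_restrict hpi.le (hFcont.intervalIntegrable _ _) hGint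
    have h0 : ∀ᵐ (t:ℝ) ∂(volume.restrict (Set.Icc (0:ℝ) π)), t ≠ 0 := by
      rw [ae_iff]
      have hset : {a : ℝ | ¬ a ≠ 0} = {0} := by ext x; simp
      rw [hset]
      exact le_zero_iff.mp (le_trans (Measure.restrict_apply_le _ _) (by simp))
    filter_upwards [h0, ae_restrict_mem measurableSet_Icc] with t ht0 htmem
    have hd := dirichlet_bound n t ⟨by linarith [htmem.1], htmem.2⟩ ht0
    have habs : |t| = t := abs_of_nonneg htmem.1
    have ht' : 0 < t := lt_of_le_of_ne htmem.1 (Ne.symm ht0)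
    calc F t ≤ (π / t) ^ p := by
          apply Real.rpow_le_rpow (norm_nonneg _) _ hp0.le
          rwa [habs] at hd
      _ = G t := by
          simp only [hG]
          rw [Real.div_rpow hpi.le ht'.le, Real.rpow_neg ht'.le, div_eq_mul_inv]
  have hGval : (∫ t in (0:ℝ)..π, G t) = π / (1-p) := by
    rw [hG]
    rw [intervalIntegral.integral_const_mul, integral_rpow (Or.inl (by linarith))]
    rw [Real.zero_rpow (by linarith : -p + 1 ≠ 0), sub_zero,
      show (-p + 1) = 1 - p by ring, ← mul_div_assoc, ← Real.rpow_add hpi,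
      show p + (1-p) = 1 by ring, Real.rpow_one]
  linarith [hmono, hGval.le, hGval.ge]

theorem stmt_6 (p : ℝ) (hp : p ∈ Set.Ico (1/2 : ℝ) 1) (n : ℕ) (hn : 1 ≤ n) :
    ((1 / (2 * Real.pi)) *
        ∫ t in (-Real.pi)..Real.pi,
          ‖∑ j ∈ Finset.range n, Complex.exp (Complex.I * t) ^ j‖ ^ p) ^ (1 / p)
      ≤ 2 / (1 - p) := by
  obtain ⟨hp1, hp2⟩ := hp
  have hp0 : (0:ℝ) < p := by linarith
  have hq : (0:ℝ) < 1 - p := by linarith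
  have hpi := Real.pi_pos
  set F : ℝ → ℝ := fun t => ‖∑ j ∈ Finset.range n, Complex.exp (Complex.I * t) ^ j‖ ^ p with hF
  have hFcont : Continuous F := by
    apply Continuous.rpow_const
    · exact continuous_norm.comp (continuous_finset_sum _ fun j _ =>
        ((Complex.continuous_exp.comp (by continuity)).pow j))
    · exact fun x => Or.inr hp0.le
  have hsplit : (∫ t in (-π)..π, F t) = (∫ t in (-π)..(0:ℝ), F t) + ∫ t in (0:ℝ)..π, F t :=
    (intervalIntegral.integral_add_adjacent_intervals (hFcont.intervalIntegrable _ _)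
      (hFcont.intervalIntegrable _ _)).symm
  have heven : (∫ t in (-π)..(0:ℝ), F t) = ∫ t in (0:ℝ)..π, F t := by
    have := intervalIntegral.integral_comp_neg (a := (0:ℝ)) (b := π) (f := F)
    rw [neg_zero] at this
    rw [← this]
    refine intervalIntegral.integral_congr fun x _ => ?_
    simp only [hF]
    rw [sum_even n x]
  have hhalf := half_bound p ⟨hp1, hp2⟩ n
  have hInt : (∫ t in (-π)..π, F t) ≤ 2 * (π / (1-p)) := by
    rw [hsplit, heven]; linarith
  have hnonneg : 0 ≤ ∫ t in (-π)..π, F t := by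
    apply intervalIntegral.integral_nonneg (by linarith)
    intro u _
    exact Real.rpow_nonneg (norm_nonneg _) _
  have hbase : (1 / (2 * π)) * (∫ t in (-π)..π, F t) ≤ 1/(1-p) := by
    rw [div_mul_eq_mul_div, one_mul, div_le_div_iff₀ (by positivity) hq]
    calc (∫ t in (-π)..π, F t) * (1-p) ≤ (2 * (π / (1-p))) * (1-p) := by
          apply mul_le_mul_of_nonneg_right hInt hq.le
      _ = 2 * π := by field_simp
      _ = 1 * (2 * π) := by ring
  calc ((1 / (2 * π)) * ∫ t in (-π)..π, F t) ^ (1/p)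
      ≤ ((1/(1-p)) : ℝ) ^ (1/p) := by
        apply Real.rpow_le_rpow (by positivity) hbase (by positivity)
    _ ≤ 2/(1-p) := scalar_ineq hp1 hp2
end

section
/- For every p ∈ (0,1) and every integer n ≥ 2, ‖D_n^+‖_{H^p}^p ≥ (2^{p/2 - 1}/π^p) · (1 - n^{p-1})/(1-p). -/
open Real Finset MeasureTheory


lemma chord (θ : ℝ) : ‖Complex.exp (Complex.I * θ) - 1‖ = 2 * |Real.sin (θ/2)| := by
  rw [Real.abs_sin_half]
  rw [Complex.norm_def, Complex.normSq_apply]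
  rw [mul_comm Complex.I (θ:ℂ), Complex.exp_mul_I]
  simp only [Complex.add_re, Complex.add_im, Complex.sub_re, Complex.sub_im, Complex.one_re,
    Complex.one_im, Complex.mul_re, Complex.mul_im, Complex.I_re, Complex.I_im,
    Complex.cos_ofReal_re, Complex.sin_ofReal_re, Complex.cos_ofReal_im, Complex.sin_ofReal_im]
  rw [show (Real.cos θ + (Real.sin θ * 0 - 0 * 1) - 1) * (Real.cos θ + (Real.sin θ * 0 - 0 * 1) - 1) +
        (0 + (Real.sin θ * 1 + 0 * 0) - 0) * (0 + (Real.sin θ * 1 + 0 * 0) - 0)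
      = 2^2 * ((1 - Real.cos θ)/2) by nlinarith [Real.sin_sq_add_cos_sq θ]]
  rw [Real.sqrt_mul (by positivity), Real.sqrt_sq (by norm_num : (0:ℝ) ≤ 2)]

lemma geom_lb (n : ℕ) (t : ℝ) (h1 : 0 < t) (h2 : t ≤ π) :
    2 * |Real.sin (n * t / 2)| / t
      ≤ ‖∑ j ∈ Finset.range n, Complex.exp (Complex.I * t) ^ j‖ := by
  have hz : Complex.exp (Complex.I * t) ≠ 1 := by
    rw [Ne, Complex.exp_eq_one_iff]
    rintro ⟨k, hk⟩
    have h3 : (t : ℂ) = (k : ℂ) * (2 * π) := by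
      have := mul_left_cancel₀ Complex.I_ne_zero
        (show Complex.I * t = Complex.I * ((k:ℂ) * (2*π)) by rw [hk]; ring)
      exact this
    have h4 : t = (k : ℝ) * (2 * π) := by exact_mod_cast h3
    have hπ := Real.pi_gt_three
    rcases le_or_gt (k:ℝ) 0 with h | h
    · nlinarith
    · have : (1:ℝ) ≤ (k:ℝ) := by exact_mod_cast h
      nlinarith
  have hsum : ∑ j ∈ Finset.range n, Complex.exp (Complex.I * t) ^ j
      = (Complex.exp (Complex.I * t) ^ n - 1) / (Complex.exp (Complex.I * t) - 1) :=
    geom_sum_eq hz n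
  rw [hsum, norm_div]
  rw [← Complex.exp_nat_mul]
  have e1 : ‖Complex.exp ((n:ℂ) * (Complex.I * t)) - 1‖ = 2 * |Real.sin (n * t / 2)| := by
    rw [show (n:ℂ) * (Complex.I * t) = Complex.I * ((n*t : ℝ) : ℂ) by push_cast; ring, chord]
  have e2 : ‖Complex.exp (Complex.I * t) - 1‖ = 2 * |Real.sin (t / 2)| := chord t
  rw [e1, e2]
  have hs : 0 < Real.sin (t/2) := Real.sin_pos_of_pos_of_lt_pi (by linarith) (by linarith [Real.pi_gt_three])
  rw [abs_of_pos hs]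
  have hle : Real.sin (t/2) ≤ t/2 := Real.sin_le (by linarith)
  rw [div_le_div_iff₀ h1 (by linarith)]
  have := abs_nonneg (Real.sin (n*t/2))
  nlinarith

lemma sin_big (m : ℕ) (θ : ℝ) (h1 : m * π - 3*π/4 ≤ θ) (h2 : θ ≤ m * π - π/4) :
    Real.sqrt 2 / 2 ≤ |Real.sin θ| := by
  have hπ : 0 < π := Real.pi_pos
  set v : ℝ := m * π - θ with hv
  have hv1 : π/4 ≤ v := by simp [hv]; linarith
  have hv2 : v ≤ 3*π/4 := by simp [hv]; linarith
  have hsv : Real.sin (m*π - θ) = -((-1)^m * Real.sin θ) := Real.sin_nat_mul_pi_sub θ m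
  have habs : |Real.sin θ| = |Real.sin v| := by
    rw [hsv]
    rw [abs_neg, abs_mul, abs_pow, abs_neg, abs_one, one_pow, one_mul]
  rw [habs]
  have hsvnn : 0 ≤ Real.sin v := Real.sin_nonneg_of_nonneg_of_le_pi (by linarith) (by linarith)
  rw [abs_of_nonneg hsvnn]
  have : Real.sin v = Real.cos (v - π/2) := by
    rw [Real.cos_sub]
    simp
  rw [this]
  have h3 : Real.cos (v - π/2) = Real.cos |v - π/2| := (Real.cos_abs _).symm
  rw [h3, ← Real.cos_pi_div_four]
  apply Real.cos_le_cos_of_nonneg_of_le_pi (abs_nonneg _) (by linarith)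
  rw [abs_le]; constructor <;> linarith

lemma sum_lb (p : ℝ) (hp0 : 0 < p) (hp1 : p < 1) (n : ℕ) :
    ((n:ℝ) ^ (1-p) - 1) / (1-p) ≤ ∑ k ∈ Finset.range n, ((k:ℝ)+1) ^ (-p) := by
  have key : ∀ m : ℕ, (((m:ℝ)+1) ^ (1-p) - 1) / (1-p) ≤ ∑ k ∈ Finset.range m, ((k:ℝ)+1) ^ (-p) := by
    intro m
    have hint : ∀ k : ℕ, (∫ x in ((k:ℝ)+1)..((k:ℝ)+2), x ^ (-p)) ≤ ((k:ℝ)+1) ^ (-p) := by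
      intro k
      have h1 : ((k:ℝ)+1) ≤ (k:ℝ)+2 := by linarith
      have hmono : ∀ x ∈ Set.Icc ((k:ℝ)+1) ((k:ℝ)+2), x ^ (-p) ≤ ((k:ℝ)+1) ^ (-p) := by
        intro x hx
        exact Real.rpow_le_rpow_of_nonpos (by positivity) hx.1 (by linarith)
      have hi1 : IntervalIntegrable (fun x : ℝ => x ^ (-p)) MeasureTheory.volume ((k:ℝ)+1) ((k:ℝ)+2) := by
        apply ContinuousOn.intervalIntegrable
        apply ContinuousOn.rpow_const continuousOn_id
        intro x hx
        left
        rw [Set.uIcc_of_le h1] at hx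
        have hx0 : (0:ℝ) < x := lt_of_lt_of_le (by positivity) hx.1
        simp only [id_eq]
        exact ne_of_gt hx0
      calc (∫ x in ((k:ℝ)+1)..((k:ℝ)+2), x ^ (-p))
          ≤ ∫ _ in ((k:ℝ)+1)..((k:ℝ)+2), ((k:ℝ)+1) ^ (-p) := by
            apply intervalIntegral.integral_mono_on h1 hi1 intervalIntegrable_const hmono
        _ = ((k:ℝ)+1) ^ (-p) := by simp; ring
    have hadj : ∑ k ∈ Finset.range m, (∫ x in ((k:ℝ)+1)..((k:ℝ)+2), x ^ (-p))
        = ∫ x in (1:ℝ)..((m:ℝ)+1), x ^ (-p) := by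
      have := intervalIntegral.sum_integral_adjacent_intervals (a := fun k : ℕ => (k:ℝ)+1)
        (n := m) (f := fun x : ℝ => x ^ (-p)) (μ := MeasureTheory.volume) ?_
      · convert this using 2 with k
        · push_cast; ring_nf
        · push_cast; ring_nf
      · intro k _
        apply ContinuousOn.intervalIntegrable
        apply ContinuousOn.rpow_const continuousOn_id
        intro x hx
        left
        rw [Set.uIcc_of_le (by push_cast; linarith)] at hx
        have hx0 : (0:ℝ) < x := lt_of_lt_of_le (by positivity) hx.1
        simp only [id_eq]
        exact ne_of_gt hx0
    have hval : (∫ x in (1:ℝ)..((m:ℝ)+1), x ^ (-p)) = (((m:ℝ)+1) ^ (1-p) - 1) / (1-p) := by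
      rw [integral_rpow (Or.inl (by linarith))]
      rw [Real.one_rpow]
      ring_nf
    calc (((m:ℝ)+1) ^ (1-p) - 1) / (1-p) = ∫ x in (1:ℝ)..((m:ℝ)+1), x ^ (-p) := by
          rw [hval]
      _ = ∑ k ∈ Finset.range m, (∫ x in ((k:ℝ)+1)..((k:ℝ)+2), x ^ (-p)) := hadj.symm
      _ ≤ ∑ k ∈ Finset.range m, ((k:ℝ)+1) ^ (-p) := Finset.sum_le_sum (fun k _ => hint k)
  refine le_trans ?_ (key n)
  have h := Real.rpow_le_rpow (Nat.cast_nonneg n) (by linarith : (n:ℝ) ≤ (n:ℝ)+1) (by linarith : (0:ℝ) ≤ 1-p)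
  gcongr

noncomputable def ck (n k : ℕ) : ℝ := (if k % 2 = 1 then (k:ℝ) - 1/2 else (k:ℝ) - 1) * π / n


lemma ck_lb (n k : ℕ) (hn : 0 < n) : ((k:ℝ)-1) * π/n ≤ ck n k := by
  unfold ck
  have h := Real.pi_pos
  have hn' : (0:ℝ) < (n:ℝ) := by exact_mod_cast hn
  split
  · rw [div_le_div_iff₀ hn' hn']; nlinarith
  · exact le_refl _

lemma ck_ub (n k : ℕ) (hn : 0 < n) : ck n k + π/(2*n) ≤ (k:ℝ)*π/n := by
  unfold ck
  have h := Real.pi_pos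
  have hn' : (0:ℝ) < (n:ℝ) := by exact_mod_cast hn
  split <;> rw [div_add_div _ _ (ne_of_gt hn') (by positivity), div_le_div_iff₀ (by positivity) hn'] <;> nlinarith [mul_pos hn' hn', mul_pos (mul_pos hn' hn') h]

lemma ptwise (n k : ℕ) (hn : 0 < n) (h1 : 1 ≤ k) (h2 : k ≤ n) (t : ℝ)
    (ht : t ∈ Set.Ioc (ck n k) (ck n k + π/(2*(n:ℝ)))) :
    Real.sqrt 2 * n / (k * π)
      ≤ ‖∑ j ∈ Finset.range n, Complex.exp (Complex.I * t) ^ j‖ := by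
  have hπ := Real.pi_pos
  have hn' : (0:ℝ) < (n:ℝ) := by exact_mod_cast hn
  have hk' : (1:ℝ) ≤ (k:ℝ) := by exact_mod_cast h1
  have hkn : (k:ℝ) ≤ (n:ℝ) := by exact_mod_cast h2
  have hck0 : (0:ℝ) ≤ ck n k :=
    le_trans (div_nonneg (by nlinarith) (le_of_lt hn')) (ck_lb n k hn)
  have ht0 : 0 < t := lt_of_le_of_lt hck0 ht.1
  have htk : t ≤ (k:ℝ)*π/(n:ℝ) := le_trans ht.2 (ck_ub n k hn)
  have htπ : t ≤ π := le_trans htk (by rw [div_le_iff₀ hn']; nlinarith)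
  set m : ℕ := (k+1)/2 with hm
  have hsin : Real.sqrt 2 / 2 ≤ |Real.sin ((n:ℝ) * t / 2)| := by
    have hlow : ck n k < t := ht.1
    have hup : t ≤ ck n k + π/(2*(n:ℝ)) := ht.2
    have hlow2 : (n:ℝ) * ck n k < (n:ℝ) * t := mul_lt_mul_of_pos_left hlow hn'
    have hup2 : (n:ℝ) * t ≤ (n:ℝ) * (ck n k + π/(2*(n:ℝ))) :=
      mul_le_mul_of_nonneg_left hup (le_of_lt hn')
    rcases Nat.even_or_odd k with he | ho
    · obtain ⟨j, hj⟩ := he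
      have hk2 : (k:ℝ) * π = 2*(m:ℝ) * π := by
        have : (k:ℝ) = 2*(m:ℝ) := by exact_mod_cast (by omega : k = 2*m)
        rw [this]
      have hc : ck n k = ((k:ℝ) - 1) * π / n := by
        unfold ck; rw [if_neg (by omega)]
      have e1 : (n:ℝ) * ck n k = (k:ℝ)*π - π := by rw [hc]; field_simp
      have e2 : (n:ℝ) * (ck n k + π/(2*(n:ℝ))) = (k:ℝ)*π - π + π/2 := by
        rw [hc]; field_simp
      rw [e1] at hlow2
      rw [e2] at hup2
      exact sin_big m _ (by linarith) (by linarith)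
    · obtain ⟨j, hj⟩ := ho
      have hk2 : (k:ℝ) * π = (2*(m:ℝ) - 1) * π := by
        have h7 : (k:ℝ) + 1 = 2*(m:ℝ) := by exact_mod_cast (by omega : k + 1 = 2*m)
        have : (k:ℝ) = 2*(m:ℝ) - 1 := by linarith
        rw [this]
      have hc : ck n k = ((k:ℝ) - 1/2) * π / n := by
        unfold ck; rw [if_pos (by omega)]
      have e1 : (n:ℝ) * ck n k = (k:ℝ)*π - π/2 := by rw [hc]; field_simp
      have e2 : (n:ℝ) * (ck n k + π/(2*(n:ℝ))) = (k:ℝ)*π := by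
        rw [hc]; field_simp; ring
      rw [e1] at hlow2
      rw [e2] at hup2
      exact sin_big m _ (by linarith) (by linarith)
  refine le_trans ?_ (geom_lb n t ht0 htπ)
  rw [div_le_div_iff₀ (by positivity) ht0]
  have hsq : (0:ℝ) ≤ Real.sqrt 2 := Real.sqrt_nonneg 2
  have htk' : t * (n:ℝ) ≤ (k:ℝ)*π := by rwa [← le_div_iff₀ hn']
  have hkπ : (0:ℝ) ≤ (k:ℝ)*π := by positivity
  nlinarith [mul_le_mul_of_nonneg_left htk' hsq, mul_le_mul_of_nonneg_right hsin hkπ]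

theorem stmt_10 (p : ℝ) (hp : p ∈ Set.Ioo (0:ℝ) 1) (n : ℕ) (hn : 2 ≤ n) :
    (2 : ℝ) ^ (p / 2 - 1) / Real.pi ^ p * ((1 - (n : ℝ) ^ (p - 1)) / (1 - p))
      ≤ (1 / (2 * Real.pi)) *
        ∫ t in (-Real.pi)..Real.pi,
          ‖∑ j ∈ Finset.range n, Complex.exp (Complex.I * t) ^ j‖ ^ p := by
  obtain ⟨hp0, hp1⟩ := hp
  have hπ := Real.pi_pos
  have hn0 : 0 < n := by omega
  have hn' : (0:ℝ) < (n:ℝ) := by exact_mod_cast hn0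
  set f : ℝ → ℝ := fun t => ‖∑ j ∈ Finset.range n, Complex.exp (Complex.I * t) ^ j‖ ^ p with hf
  -- continuity
  have habs_cont : Continuous fun t : ℝ => ‖∑ j ∈ Finset.range n, Complex.exp (Complex.I * t) ^ j‖ := by
    apply continuous_norm.comp
    apply continuous_finset_sum
    intro j _
    exact (Complex.continuous_exp.comp (continuous_const.mul Complex.continuous_ofReal)).pow j
  have hf_cont : Continuous f := habs_cont.rpow_const (fun x => Or.inr hp0.le)
  have hf_nonneg : ∀ t, 0 ≤ f t := fun t => Real.rpow_nonneg (norm_nonneg _) p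
  -- evenness
  have heven : ∀ t : ℝ, f (-t) = f t := by
    intro t
    have : (∑ j ∈ Finset.range n, Complex.exp (Complex.I * (↑(-t) : ℝ)) ^ j)
        = starRingEnd ℂ (∑ j ∈ Finset.range n, Complex.exp (Complex.I * (t:ℝ)) ^ j) := by
      rw [map_sum]
      apply Finset.sum_congr rfl
      intro j _
      rw [map_pow]
      congr 1
      rw [← Complex.exp_conj]
      congr 1
      rw [map_mul, Complex.conj_I, Complex.conj_ofReal]
      push_cast
      ring
    simp only [hf, this, Complex.norm_conj]
  -- split the integral
  have hsplit : (∫ t in (-π)..π, f t) = 2 * ∫ t in Set.Ioc (0:ℝ) π, f t := by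
    have h1 : (∫ t in (-π)..(0:ℝ), f t) = ∫ t in (0:ℝ)..π, f t := by
      have h2 := intervalIntegral.integral_comp_neg (a := (0:ℝ)) (b := π) (f := f)
      simp only [neg_zero] at h2
      rw [← h2]
      apply intervalIntegral.integral_congr
      intro x _
      exact heven x
    have h3 : (∫ t in (-π)..(0:ℝ), f t) + (∫ t in (0:ℝ)..π, f t) = ∫ t in (-π)..π, f t :=
      intervalIntegral.integral_add_adjacent_intervals
        (hf_cont.intervalIntegrable _ _) (hf_cont.intervalIntegrable _ _)
    rw [← h3, h1, intervalIntegral.integral_of_le hπ.le]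
    ring
  -- the intervals
  set s : ℕ → Set ℝ := fun i => Set.Ioc (ck n (i+1)) (ck n (i+1) + π/(2*(n:ℝ))) with hs
  have hsub : ∀ i, i < n → s i ⊆ Set.Ioc ((i:ℝ)*π/n) (((i:ℝ)+1)*π/n) := by
    intro i hi
    apply Set.Ioc_subset_Ioc
    · have := ck_lb n (i+1) hn0
      push_cast at this ⊢
      have e : ((i:ℝ) + 1 - 1) * π / ↑n = (i:ℝ) * π / ↑n := by ring
      rw [e] at this
      exact this
    · have := ck_ub n (i+1) hn0
      push_cast at this ⊢
      exact this
  have hsub2 : ∀ i, i < n → s i ⊆ Set.Ioc (0:ℝ) π := by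
    intro i hi
    refine (hsub i hi).trans (Set.Ioc_subset_Ioc ?_ ?_)
    · positivity
    · rw [div_le_iff₀ hn']
      have : (i:ℝ)+1 ≤ (n:ℝ) := by exact_mod_cast (by omega : i+1 ≤ n)
      nlinarith
  have hdisj : (↑(Finset.range n) : Set ℕ).Pairwise (Function.onFun Disjoint s) := by
    intro i hi j hj hij
    simp only [Finset.coe_range, Set.mem_Iio] at hi hj
    have key : ∀ a b : ℕ, a < b → b < n → Disjoint (s a) (s b) := by
      intro a b hab hbn
      apply Set.disjoint_of_subset (hsub a (hab.trans hbn)) (hsub b hbn)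
      rw [Set.Ioc_disjoint_Ioc]
      have h4 : ((a:ℝ)+1) ≤ (b:ℝ) := by exact_mod_cast (by omega : a+1 ≤ b)
      calc min (((a:ℝ)+1)*π/n) (((b:ℝ)+1)*π/n) ≤ ((a:ℝ)+1)*π/n := min_le_left _ _
        _ ≤ (b:ℝ)*π/n := by gcongr
        _ ≤ max ((a:ℝ)*π/n) ((b:ℝ)*π/n) := le_max_right _ _
    rcases lt_or_gt_of_ne hij with h | h
    · exact key i j h hj
    · exact (key j i h hi).symm
  -- per-interval bound
  have hval : ∀ i, i < n → (Real.sqrt 2 * n / ((i+1) * π)) ^ p * (π/(2*(n:ℝ))) ≤ ∫ t in s i, f t := by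
    intro i hi
    have hmeas : MeasurableSet (s i) := measurableSet_Ioc
    have hfin : volume (s i) ≠ ⊤ := by
      rw [hs]; simp [Real.volume_Ioc]
    have hconst : ∀ x ∈ s i, (Real.sqrt 2 * n / ((i+1) * π)) ^ p ≤ f x := by
      intro x hx
      have h5 := ptwise n (i+1) hn0 (by omega) (by omega) x hx
      push_cast at h5
      apply Real.rpow_le_rpow (by positivity) h5 hp0.le
    have hint : IntegrableOn f (s i) := hf_cont.integrableOn_Ioc
    have h6 := setIntegral_ge_of_const_le hmeas hfin hconst hint
    have h7 : volume.real (s i) = π/(2*(n:ℝ)) := by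
      rw [Measure.real, hs]
      simp only [Real.volume_Ioc]
      rw [ENNReal.toReal_ofReal (by ring_nf; positivity)]
      ring
    rw [h7, smul_eq_mul, mul_comm] at h6
    exact_mod_cast h6
  -- sum ≤ integral over Ioc 0 π
  have hsum_int : ∑ i ∈ Finset.range n, ((Real.sqrt 2 * n / (((i:ℝ)+1) * π)) ^ p * (π/(2*(n:ℝ))))
      ≤ ∫ t in Set.Ioc (0:ℝ) π, f t := by
    have e1 : ∑ i ∈ Finset.range n, ((Real.sqrt 2 * n / (((i:ℝ)+1) * π)) ^ p * (π/(2*(n:ℝ))))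
        ≤ ∑ i ∈ Finset.range n, ∫ t in s i, f t := by
      apply Finset.sum_le_sum
      intro i hi
      exact hval i (Finset.mem_range.mp hi)
    have e2 : ∑ i ∈ Finset.range n, (∫ t in s i, f t)
        = ∫ t in ⋃ i ∈ Finset.range n, s i, f t := by
      rw [integral_biUnion_finset (Finset.range n) (fun i _ => measurableSet_Ioc) hdisj
        (fun i _ => hf_cont.integrableOn_Ioc)]
    have e3 : (∫ t in ⋃ i ∈ Finset.range n, s i, f t) ≤ ∫ t in Set.Ioc (0:ℝ) π, f t := by
      apply setIntegral_mono_set hf_cont.integrableOn_Ioc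
        (Filter.Eventually.of_forall fun x => hf_nonneg x)
      apply HasSubset.Subset.eventuallyLE
      intro x hx
      simp only [Set.mem_iUnion] at hx
      obtain ⟨i, hi, hxi⟩ := hx
      exact hsub2 i (Finset.mem_range.mp hi) hxi
    linarith
  -- arithmetic
  have hC : (0:ℝ) < (2:ℝ)^(p/2-1)/π^p := by positivity
  have hone : (n:ℝ)^(p-1) * (n:ℝ)^(1-p) = 1 := by
    rw [← Real.rpow_add hn']; norm_num
  have key1 : (1 - (n:ℝ)^(p-1))/(1-p) = (n:ℝ)^(p-1) * (((n:ℝ)^(1-p) - 1)/(1-p)) := by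
    rw [mul_div_assoc']
    congr 1
    rw [mul_sub, hone, mul_one]
  have hsqrtp : (Real.sqrt 2) ^ p = (2:ℝ)^(p/2) := by
    rw [Real.sqrt_eq_rpow, ← Real.rpow_mul (by norm_num : (0:ℝ) ≤ 2)]
    congr 1
    ring
  have term_eq : ∀ x : ℝ, 0 < x →
      (Real.sqrt 2 * (n:ℝ) / (x*π))^p * (π/(2*(n:ℝ)))
        = π * ((2:ℝ)^(p/2-1)/π^p * ((n:ℝ)^(p-1) * x^(-p))) := by
    intro x hx
    have h1 : (Real.sqrt 2 * (n:ℝ) / (x*π))^p = (2:ℝ)^(p/2) * (n:ℝ)^p / (x^p * π^p) := by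
      rw [Real.div_rpow (by positivity) (by positivity),
        Real.mul_rpow (Real.sqrt_nonneg 2) hn'.le,
        Real.mul_rpow hx.le hπ.le, hsqrtp]
    have h2 : (2:ℝ)^(p/2-1) = (2:ℝ)^(p/2) / 2 := by
      rw [Real.rpow_sub (by norm_num : (0:ℝ) < 2), Real.rpow_one]
    have h3 : (n:ℝ)^(p-1) = (n:ℝ)^p / (n:ℝ) := by
      rw [Real.rpow_sub hn', Real.rpow_one]
    have h4 : x^(-p) = (x^p)⁻¹ := by
      rw [Real.rpow_neg hx.le]
    rw [h1, h2, h3, h4]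
    have hxp : (0:ℝ) < x^p := Real.rpow_pos_of_pos hx p
    have hπp : (0:ℝ) < π^p := Real.rpow_pos_of_pos hπ p
    field_simp
  have hsumeq : (∑ i ∈ Finset.range n, ((Real.sqrt 2 * (n:ℝ) / (((i:ℝ)+1) * π)) ^ p * (π/(2*(n:ℝ)))))
      = π * ((2:ℝ)^(p/2-1)/π^p * ((n:ℝ)^(p-1) * ∑ i ∈ Finset.range n, ((i:ℝ)+1)^(-p))) := by
    rw [Finset.mul_sum, Finset.mul_sum, Finset.mul_sum]
    apply Finset.sum_congr rfl
    intro i _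
    exact term_eq ((i:ℝ)+1) (by positivity)
  calc (2:ℝ)^(p/2-1)/π^p * ((1 - (n:ℝ)^(p-1))/(1-p))
      = (2:ℝ)^(p/2-1)/π^p * ((n:ℝ)^(p-1) * (((n:ℝ)^(1-p) - 1)/(1-p))) := by rw [key1]
    _ ≤ (2:ℝ)^(p/2-1)/π^p * ((n:ℝ)^(p-1) * ∑ i ∈ Finset.range n, ((i:ℝ)+1)^(-p)) :=
        mul_le_mul_of_nonneg_left
          (mul_le_mul_of_nonneg_left (sum_lb p hp0 hp1 n) (Real.rpow_nonneg hn'.le _)) hC.le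
    _ = (1/(2*π)) * (2 * ∑ i ∈ Finset.range n, ((Real.sqrt 2 * (n:ℝ) / (((i:ℝ)+1) * π)) ^ p * (π/(2*(n:ℝ))))) := by
        rw [hsumeq]
        conv_rhs => rw [← mul_assoc, ← mul_assoc]
        rw [show (1:ℝ)/(2*π)*2*π = 1 by field_simp, one_mul]
    _ ≤ (1/(2*π)) * (2 * ∫ t in Set.Ioc (0:ℝ) π, f t) := by
        have h8 : (0:ℝ) ≤ 1/(2*π) := by positivity
        apply mul_le_mul_of_nonneg_left (by linarith [hsum_int]) h8
    _ = (1/(2*π)) * ∫ t in (-π)..π, f t := by rw [hsplit]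
end
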